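/- Let b₀ > 0 and s₀ ∈ ℝ be constants and let A, ρ: I → (0,∞) be differentiable on an open interval I ⊆ (0,∞) satisfying the divergence constraint (A(r)ρ(r)²)'/(A(r)ρ(r)²) = 2s₀²/(r⁵b₀² + r·s₀²) on I. Then the function r ↦ A(r)·ρ(r)²·√(b₀² + s₀²·r⁻⁴) is constant on I; i.e. ρ² = (1/A)·c̃_ρ/√(b₀² + s₀² r⁻⁴) for a constant c̃_ρ. -/

import Mathlib

open Real Set

/-- Let `b₀ > 0`, `s₀ ∈ ℝ`, and `A, ρ : (a,b) → (0,∞)` (with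
`(a,b) ⊆ (0,∞)`) differentiable, satisfying the divergence constraint
`(Aρ²)'/(Aρ²) = 2s₀²/(r⁵b₀² + r s₀²)`. Then `r ↦ A·ρ²·√(b₀² + s₀²r⁻⁴)` is constant on
`(a,b)`; i.e. `ρ² = (1/A)·c̃_ρ/√(b₀² + s₀²r⁻⁴)` for a constant `c̃_ρ`. -/
theorem E_zero_branch_dilaton
    (a b b₀ s₀ : ℝ) (ha : 0 ≤ a) (hb₀ : 0 < b₀)
    (A ρ : ℝ → ℝ)
    (hApos : ∀ r ∈ Ioo a b, 0 < A r)
    (hρpos : ∀ r ∈ Ioo a b, 0 < ρ r)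
    (hAdiff : ∀ r ∈ Ioo a b, DifferentiableAt ℝ A r)
    (hρdiff : ∀ r ∈ Ioo a b, DifferentiableAt ℝ ρ r)
    (hconstr : ∀ r ∈ Ioo a b,
      deriv (fun s => A s * ρ s ^ 2) r / (A r * ρ r ^ 2)
        = 2 * s₀ ^ 2 / (r ^ 5 * b₀ ^ 2 + r * s₀ ^ 2)) :
    ∃ c : ℝ, ∀ r ∈ Ioo a b,
      A r * ρ r ^ 2 * Real.sqrt (b₀ ^ 2 + s₀ ^ 2 * (r ^ 4)⁻¹) = c := by
  set f : ℝ → ℝ := fun r => A r * ρ r ^ 2 * Real.sqrt (b₀ ^ 2 + s₀ ^ 2 * (r ^ 4)⁻¹) with hf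
  -- key: f has derivative 0 on Ioo a b
  have key : ∀ r ∈ Ioo a b, HasDerivAt f 0 r := by
    intro r hr
    have hr0 : 0 < r := lt_of_le_of_lt ha hr.1
    have hA := hApos r hr
    have hρ := hρpos r hr
    have hg : 0 < A r * ρ r ^ 2 := by positivity
    have hq : 0 < b₀ ^ 2 + s₀ ^ 2 * (r ^ 4)⁻¹ := by positivity
    have hs : 0 < Real.sqrt (b₀ ^ 2 + s₀ ^ 2 * (r ^ 4)⁻¹) := Real.sqrt_pos.mpr hq
    have hs2 : Real.sqrt (b₀ ^ 2 + s₀ ^ 2 * (r ^ 4)⁻¹) ^ 2 = b₀ ^ 2 + s₀ ^ 2 * (r ^ 4)⁻¹ :=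
      Real.sq_sqrt hq.le
    -- derivative of g = A ρ²
    have hgdiff : DifferentiableAt ℝ (fun s => A s * ρ s ^ 2) r :=
      (hAdiff r hr).mul ((hρdiff r hr).pow 2)
    have hgd : HasDerivAt (fun s => A s * ρ s ^ 2)
        (A r * ρ r ^ 2 * (2 * s₀ ^ 2 / (r ^ 5 * b₀ ^ 2 + r * s₀ ^ 2))) r := by
      have h1 := hgdiff.hasDerivAt
      have h2 := hconstr r hr
      have : deriv (fun s => A s * ρ s ^ 2) r
          = A r * ρ r ^ 2 * (2 * s₀ ^ 2 / (r ^ 5 * b₀ ^ 2 + r * s₀ ^ 2)) := by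
        field_simp at h2 ⊢
        linarith [h2]
      rwa [this] at h1
    -- derivative of inner function q = b₀² + s₀² r⁻⁴
    have hqd : HasDerivAt (fun s : ℝ => b₀ ^ 2 + s₀ ^ 2 * (s ^ 4)⁻¹)
        (s₀ ^ 2 * (-(4 * r ^ 3) / (r ^ 4) ^ 2)) r := by
      have h4 : HasDerivAt (fun s : ℝ => s ^ 4) (4 * r ^ 3) r := by
        simpa using hasDerivAt_pow 4 r
      have := (h4.inv (by positivity)).const_mul (s₀ ^ 2)
      simpa [mul_comm, mul_assoc, mul_div_assoc] using this.const_add (b₀ ^ 2)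
    have hsd : HasDerivAt (fun s : ℝ => Real.sqrt (b₀ ^ 2 + s₀ ^ 2 * (s ^ 4)⁻¹))
        (s₀ ^ 2 * (-(4 * r ^ 3) / (r ^ 4) ^ 2) / (2 * Real.sqrt (b₀ ^ 2 + s₀ ^ 2 * (r ^ 4)⁻¹))) r :=
      hqd.sqrt hq.ne'
    have := hgd.mul hsd
    have hzero : A r * ρ r ^ 2 * (2 * s₀ ^ 2 / (r ^ 5 * b₀ ^ 2 + r * s₀ ^ 2)) *
          Real.sqrt (b₀ ^ 2 + s₀ ^ 2 * (r ^ 4)⁻¹)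
        + A r * ρ r ^ 2 *
          (s₀ ^ 2 * (-(4 * r ^ 3) / (r ^ 4) ^ 2) /
            (2 * Real.sqrt (b₀ ^ 2 + s₀ ^ 2 * (r ^ 4)⁻¹))) = 0 := by
      have hden : r ^ 5 * b₀ ^ 2 + r * s₀ ^ 2
          = r ^ 5 * (Real.sqrt (b₀ ^ 2 + s₀ ^ 2 * (r ^ 4)⁻¹)) ^ 2 := by
        rw [hs2]; field_simp
      rw [hden]
      field_simp
      have hr4 : Real.sqrt (r ^ 4) = r ^ 2 := by
        rw [show r ^ 4 = (r ^ 2) ^ 2 by ring, Real.sqrt_sq (by positivity)]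
      ring
    rw [hzero] at this
    exact this
  -- constancy on the convex open set Ioo a b
  rcases isEmpty_or_nonempty (Ioo a b) with hE | hNE
  · exact ⟨0, fun r hr => (hE.false ⟨r, hr⟩).elim⟩
  · obtain ⟨⟨r₀, hr₀⟩⟩ := hNE
    refine ⟨f r₀, fun r hr => ?_⟩
    have hconv : Convex ℝ (Ioo a b) := convex_Ioo a b
    have hdiff : DifferentiableOn ℝ f (Ioo a b) :=
      fun x hx => ((key x hx).differentiableAt).differentiableWithinAt
    have hfd : ∀ x ∈ Ioo a b, fderivWithin ℝ f (Ioo a b) x = 0 := by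
      intro x hx
      have h1 : fderiv ℝ f x = 0 := by
        rw [(key x hx).hasFDerivAt.fderiv]; ext; simp
      rw [fderivWithin_of_isOpen isOpen_Ioo hx, h1]
    exact hconv.is_const_of_fderivWithin_eq_zero hdiff hfd hr hr₀
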